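/- Let K be a field, U a nonempty subset of K[[t]], and f = (fᵢ) a t-ordering of U with invariants αₖ(U, f) = Σ_{j<k} v_t(fₖ − fⱼ). Then for every polynomial p(x) ∈ K[[t]][x] of degree at most k in x with at least one coefficient of t-adic valuation 0 (i.e., p is t-primitive), min over f ∈ U of v_t(p(f)) ≤ αₖ(U, f), and this maximum over t-primitive p of degree ≤ k is attained by qₖ(x) = Π_{j=0}^{k-1}(x − fⱼ), so αₖ(U, f) = max over t-primitive p of deg ≤ k of min over f ∈ U of v_t(p(f)). -/

import Mathlib

open PowerSeries Polynomial Finset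

section Aux

variable {K : Type*} [Field K]

lemma aux_order_neg (φ : PowerSeries K) : (-φ).order = φ.order := by
  have h : (-1 : PowerSeries K) * φ = -φ := by ring
  have hu : IsUnit (-1 : PowerSeries K) := IsUnit.neg isUnit_one
  rw [← h, PowerSeries.order_mul, PowerSeries.order_zero_of_unit hu, zero_add]

lemma aux_order_prod {ι : Type*} (s : Finset ι) (h : ι → PowerSeries K) :
    (∏ i ∈ s, h i).order = ∑ i ∈ s, (h i).order := by
  classical
  induction s using Finset.induction with
  | empty => simp [PowerSeries.order_one]
  | insert x s hx ih =>
      rw [Finset.prod_insert hx, PowerSeries.order_mul, ih, Finset.sum_insert hx]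

lemma aux_le_order_sum {ι : Type*} (s : Finset ι) (h : ι → PowerSeries K) (n : ℕ∞)
    (hs : ∀ i ∈ s, n ≤ (h i).order) : n ≤ (∑ i ∈ s, h i).order := by
  classical
  induction s using Finset.induction with
  | empty => simp [PowerSeries.order_zero]
  | insert x s hx ih =>
      rw [Finset.sum_insert hx]
      refine le_trans ?_ (PowerSeries.min_order_le_order_add _ _)
      exact le_min (hs _ (Finset.mem_insert_self _ _))
        (ih fun i hi => hs i (Finset.mem_insert_of_mem hi))

lemma aux_exists_expansion {R : Type*} [CommRing R] [Nontrivial R] (a : ℕ → R) :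
    ∀ (n : ℕ) (p : Polynomial R), p.natDegree ≤ n → ∃ c : ℕ → R,
      p = ∑ i ∈ Finset.range (n + 1),
        Polynomial.C (c i) * ∏ j ∈ Finset.range i, (Polynomial.X - Polynomial.C (a j)) := by
  intro n
  induction n with
  | zero =>
      intro p hp
      refine ⟨fun _ => p.coeff 0, ?_⟩
      rw [Finset.sum_range_one]
      simp only [Finset.range_zero, Finset.prod_empty, mul_one]
      exact Polynomial.eq_C_of_natDegree_le_zero hp
  | succ n ih =>
      intro p hp
      set q : Polynomial R := ∏ j ∈ Finset.range (n + 1),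
        (Polynomial.X - Polynomial.C (a j)) with hq
      have hqmonic : q.Monic :=
        Polynomial.monic_prod_of_monic _ _ fun j _ => Polynomial.monic_X_sub_C (a j)
      have hqdeg : q.natDegree = n + 1 := by
        rw [hq, Polynomial.natDegree_prod_of_monic _ _ fun j _ => Polynomial.monic_X_sub_C (a j)]
        simp [Polynomial.natDegree_X_sub_C, Polynomial.natDegree_X]
      set r : Polynomial R := p - Polynomial.C (p.coeff (n + 1)) * q with hr
      have hrdeg : r.natDegree ≤ n := by
        refine Polynomial.natDegree_le_iff_coeff_eq_zero.2 fun N hN => ?_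
        rcases lt_or_eq_of_le (Nat.succ_le_of_lt hN) with hN' | hN'
        · have h1 : p.coeff N = 0 :=
            Polynomial.coeff_eq_zero_of_natDegree_lt (lt_of_le_of_lt hp hN')
          have h2 : (Polynomial.C (p.coeff (n + 1)) * q).coeff N = 0 := by
            refine Polynomial.coeff_eq_zero_of_natDegree_lt ?_
            exact lt_of_le_of_lt (le_trans (Polynomial.natDegree_C_mul_le _ _) hqdeg.le) hN'
          simp [hr, h1, h2]
        · have hcq : q.coeff (n + 1) = 1 := by
            have := hqmonic.coeff_natDegree
            rwa [hqdeg] at this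
          rw [hr]
          simp [← hN', Polynomial.coeff_C_mul, hcq]
      obtain ⟨c, hc⟩ := ih r hrdeg
      refine ⟨Function.update c (n + 1) (p.coeff (n + 1)), ?_⟩
      rw [Finset.sum_range_succ, Function.update_self]
      have hupdate : ∑ i ∈ Finset.range (n + 1),
          Polynomial.C (Function.update c (n + 1) (p.coeff (n + 1)) i) *
              ∏ j ∈ Finset.range i, (Polynomial.X - Polynomial.C (a j)) =
          ∑ i ∈ Finset.range (n + 1),
            Polynomial.C (c i) * ∏ j ∈ Finset.range i, (Polynomial.X - Polynomial.C (a j)) :=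
        Finset.sum_congr rfl fun i hi => by
          rw [Function.update_of_ne (Nat.ne_of_lt (Finset.mem_range.1 hi))]
      rw [hupdate, ← hc, hr]
      ring

end Aux

open PowerSeries in
/-- Max–min characterization of plain `t`-exponent sequences: if `f` is a `t`-ordering of a
nonempty `U ⊆ K[[t]]` with invariants `αₖ = Σ_{j<k} v_t(fₖ - fⱼ)`, then for every
`t`-primitive polynomial `p ∈ K[[t]][x]` of degree ≤ k one has
`min_{g ∈ U} v_t(p(g)) ≤ αₖ`; the value `αₖ` is attained by
`qₖ(x) = Π_{j<k} (x - fⱼ)`, so `αₖ` equals the max over `t`-primitive `p` of degree ≤ k of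
`min_{g ∈ U} v_t(p(g))`. -/
theorem t_ordering_maxmin {K : Type*} [Field K]
    (U : Set (PowerSeries K)) (hU : U.Nonempty)
    (f : ℕ → PowerSeries K) (hf : ∀ i, f i ∈ U)
    (hord : ∀ k : ℕ, 1 ≤ k →
      (∑ j ∈ Finset.range k, (f k - f j).order) =
        ⨅ g ∈ U, ∑ j ∈ Finset.range k, (g - f j).order)
    (k : ℕ) :
    (∀ p : Polynomial (PowerSeries K), p.natDegree ≤ k → (∃ i, (p.coeff i).order = 0) →
        (⨅ g ∈ U, (Polynomial.eval g p).order) ≤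
          ∑ j ∈ Finset.range k, (f k - f j).order) ∧
      (⨅ g ∈ U,
          (Polynomial.eval g
            (∏ j ∈ Finset.range k, (Polynomial.X - Polynomial.C (f j)))).order) =
        ∑ j ∈ Finset.range k, (f k - f j).order ∧
      (∑ j ∈ Finset.range k, (f k - f j).order) =
        ⨆ p ∈ {p : Polynomial (PowerSeries K) |
            p.natDegree ≤ k ∧ ∃ i, (p.coeff i).order = 0},
          ⨅ g ∈ U, (Polynomial.eval g p).order := by
  classical
  have hstep : ∀ (l : ℕ) (g : PowerSeries K), g ∈ U →
      (∑ j ∈ Finset.range l, (f l - f j).order) ≤ ∑ j ∈ Finset.range l, (g - f j).order := by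
    intro l g hg
    rcases Nat.eq_zero_or_pos l with rfl | hl
    · simp
    · rw [hord l hl]
      exact iInf₂_le g hg
  have hmono : ∀ i ≤ k, (∑ j ∈ Finset.range i, (f i - f j).order) ≤
      ∑ j ∈ Finset.range k, (f k - f j).order := by
    intro i hik
    refine le_trans (hstep i (f k) (hf k)) ?_
    exact Finset.sum_le_sum_of_subset (Finset.range_subset_range.2 hik)
  have part1 : ∀ p : Polynomial (PowerSeries K), p.natDegree ≤ k →
      (∃ i, (p.coeff i).order = 0) →
      (⨅ g ∈ U, (Polynomial.eval g p).order) ≤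
        ∑ j ∈ Finset.range k, (f k - f j).order := by
    intro p hpk hprim
    by_contra hcon
    push_neg at hcon
    set β := ∑ j ∈ Finset.range k, (f k - f j).order with hβ
    have hβtop : β ≠ ⊤ := hcon.ne_top
    have hval : ∀ g ∈ U, β + 1 ≤ (Polynomial.eval g p).order := by
      intro g hg
      rw [ENat.add_one_le_iff hβtop]
      exact lt_of_lt_of_le hcon (iInf₂_le g hg)
    obtain ⟨c, hc⟩ := aux_exists_expansion f k p hpk
    have key : ∀ i, i ≤ k →
        β + 1 ≤ (c i).order + ∑ j ∈ Finset.range i, (f i - f j).order := by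
      intro i
      induction i using Nat.strong_induction_on with
      | _ i ih =>
        intro hik
        have hev : Polynomial.eval (f i) p
            = ∑ l ∈ Finset.range (i + 1), c l * ∏ j ∈ Finset.range l, (f i - f j) := by
          rw [hc, Polynomial.eval_finset_sum]
          rw [← Finset.sum_subset (Finset.range_subset_range.2 (by omega : i + 1 ≤ k + 1))]
          · exact Finset.sum_congr rfl fun l _ => by
              simp [Polynomial.eval_prod]
          · intro l hl hl'
            have hil : i ∈ Finset.range l := by
              simp only [Finset.mem_range] at *
              omega
            simp only [Polynomial.eval_mul, Polynomial.eval_C, Polynomial.eval_prod]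
            rw [Finset.prod_eq_zero hil (by simp)]
            ring
        have hterm : c i * ∏ j ∈ Finset.range i, (f i - f j)
            = Polynomial.eval (f i) p
              - ∑ l ∈ Finset.range i, c l * ∏ j ∈ Finset.range l, (f i - f j) := by
          rw [hev, Finset.sum_range_succ]; ring
        have h1 : β + 1 ≤ (c i * ∏ j ∈ Finset.range i, (f i - f j)).order := by
          rw [hterm, sub_eq_add_neg]
          refine le_trans (le_min ?_ ?_) (PowerSeries.min_order_le_order_add _ _)
          · exact hval (f i) (hf i)
          · rw [aux_order_neg]
            refine aux_le_order_sum _ _ _ fun l hl => ?_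
            rw [PowerSeries.order_mul, aux_order_prod]
            calc β + 1 ≤ (c l).order + ∑ j ∈ Finset.range l, (f l - f j).order :=
                  ih l (Finset.mem_range.1 hl)
                    (le_trans (le_of_lt (Finset.mem_range.1 hl)) hik)
              _ ≤ (c l).order + ∑ j ∈ Finset.range l, (f i - f j).order :=
                  add_le_add_right (hstep l (f i) (hf i)) _
        rwa [PowerSeries.order_mul, aux_order_prod] at h1
    have hpos : ∀ i, i ≤ k → PowerSeries.constantCoeff (c i) = 0 := by
      intro i hik
      by_contra h0
      have horder : (c i).order = 0 := by
        rw [show ((0 : ℕ∞) = ((0 : ℕ) : ℕ∞)) from rfl, PowerSeries.order_eq_nat]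
        exact ⟨by simpa [PowerSeries.coeff_zero_eq_constantCoeff] using h0, by omega⟩
      have h2 := key i hik
      rw [horder, zero_add] at h2
      have h3 : β + 1 ≤ β := le_trans h2 (hmono i hik)
      rw [ENat.add_one_le_iff hβtop] at h3
      exact lt_irrefl _ h3
    obtain ⟨m, hm⟩ := hprim
    have hcoeffm : PowerSeries.constantCoeff (p.coeff m) ≠ 0 := by
      rw [show ((0 : ℕ∞) = ((0 : ℕ) : ℕ∞)) from rfl, PowerSeries.order_eq_nat] at hm
      simpa [PowerSeries.coeff_zero_eq_constantCoeff] using hm.1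
    apply hcoeffm
    rw [hc, Polynomial.finset_sum_coeff, map_sum]
    refine Finset.sum_eq_zero fun l hl => ?_
    rw [Polynomial.coeff_C_mul, map_mul,
      hpos l (Nat.lt_succ_iff.1 (Finset.mem_range.1 hl)), zero_mul]
  have heval : ∀ g : PowerSeries K,
      (Polynomial.eval g (∏ j ∈ Finset.range k,
        (Polynomial.X - Polynomial.C (f j)))).order = ∑ j ∈ Finset.range k, (g - f j).order := by
    intro g
    rw [Polynomial.eval_prod, aux_order_prod]
    simp
  have part2 : (⨅ g ∈ U,
      (Polynomial.eval g
        (∏ j ∈ Finset.range k, (Polynomial.X - Polynomial.C (f j)))).order) =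
      ∑ j ∈ Finset.range k, (f k - f j).order := by
    simp_rw [heval]
    rcases Nat.eq_zero_or_pos k with rfl | hk
    · obtain ⟨g0, hg0⟩ := hU
      simp only [Finset.range_zero, Finset.sum_empty]
      exact le_antisymm (iInf₂_le g0 hg0) (le_iInf₂ fun g hg => le_refl _)
    · exact (hord k hk).symm
  have hqin : (∏ j ∈ Finset.range k, (Polynomial.X - Polynomial.C (f j))) ∈
      {p : Polynomial (PowerSeries K) | p.natDegree ≤ k ∧ ∃ i, (p.coeff i).order = 0} := by
    have hmon : (∏ j ∈ Finset.range k, (Polynomial.X - Polynomial.C (f j))).Monic :=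
      Polynomial.monic_prod_of_monic _ _ fun j _ => Polynomial.monic_X_sub_C (f j)
    have hdeg : (∏ j ∈ Finset.range k, (Polynomial.X - Polynomial.C (f j))).natDegree = k := by
      rw [Polynomial.natDegree_prod_of_monic _ _ fun j _ => Polynomial.monic_X_sub_C (f j)]
      simp [Polynomial.natDegree_X_sub_C, Polynomial.natDegree_X]
    refine ⟨hdeg.le, ⟨k, ?_⟩⟩
    have hcoeff := hmon.coeff_natDegree
    rw [hdeg] at hcoeff
    rw [hcoeff]
    exact PowerSeries.order_one
  refine ⟨part1, part2, le_antisymm ?_ (iSup₂_le fun p hp => part1 p hp.1 hp.2)⟩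
  rw [← part2]
  exact le_iSup₂ (f := fun p (_ : p ∈ {p : Polynomial (PowerSeries K) |
      p.natDegree ≤ k ∧ ∃ i, (p.coeff i).order = 0}) =>
    ⨅ g ∈ U, (Polynomial.eval g p).order) _ hqin
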